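/- Let G be a finite nonabelian AC-group (every noncentral element has abelian centralizer) in which every centralizer has order at least 3. Then G admits an abelian partition and ϑ_a(G) = n(G), the maximal size of a noncommuting set in G. -/
import Mathlib


/-- An abelian partition of a group `G`: a family of `n` pairwise disjoint sets covering `G`,
each of size at least 2 and consisting of pairwise commuting elements. -/
def IsAbelianPartition {G : Type*} [Group G] {n : ℕ} (A : Fin n → Set G) : Prop :=
  (∀ i, 2 ≤ (A i).ncard) ∧ (⋃ i, A i) = Set.univ ∧
    Pairwise (Function.onFun Disjoint A) ∧
    ∀ i, ∀ x ∈ A i, ∀ y ∈ A i, x * y = y * x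

/-- The minimal number of parts in an abelian partition of `G` (0 if none exists). -/
noncomputable def apDegree (G : Type*) [Group G] : ℕ :=
  sInf {n | ∃ A : Fin n → Set G, IsAbelianPartition A}

/-- The maximal size of a noncommuting subset of `G`. -/
noncomputable def maxNoncommuting (G : Type*) [Group G] : ℕ :=
  sSup {k | ∃ S : Set G, S.ncard = k ∧ ∀ x ∈ S, ∀ y ∈ S, x ≠ y → x * y ≠ y * x}


section Aux
variable {G : Type*} [Group G]

private lemma mem_cent_iff {x a : G} :
    a ∈ Subgroup.centralizer ({x} : Set G) ↔ x * a = a * x := by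
  simp [Subgroup.mem_centralizer_iff]

private lemma cent_eq_of
    (hAC : ∀ x : G, x ∉ Subgroup.center G →
      ∀ a ∈ Subgroup.centralizer {x}, ∀ b ∈ Subgroup.centralizer {x}, a * b = b * a)
    {x a : G} (hx : x ∉ Subgroup.center G) (ha : a ∉ Subgroup.center G)
    (hax : a ∈ Subgroup.centralizer ({x} : Set G)) :
    Subgroup.centralizer ({a} : Set G) = Subgroup.centralizer ({x} : Set G) := by
  have hxa : x ∈ Subgroup.centralizer ({a} : Set G) :=
    mem_cent_iff.mpr (mem_cent_iff.mp hax).symm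
  apply le_antisymm
  · intro b hb
    exact mem_cent_iff.mpr (hAC a ha x hxa b hb)
  · intro b hb
    exact mem_cent_iff.mpr (hAC x hx a hax b hb)

private lemma two_le_ncard_diff [Finite G]
    (h3 : ∀ x : G, 3 ≤ Nat.card (Subgroup.centralizer ({x} : Set G)))
    {x : G} (hx : x ∉ Subgroup.center G) :
    2 ≤ (((Subgroup.centralizer ({x} : Set G)) : Set G) \
        ((Subgroup.center G : Subgroup G) : Set G)).ncard := by
  have hZle : (Subgroup.center G) ≤ Subgroup.centralizer ({x} : Set G) :=
    Subgroup.center_le_centralizer _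
  have hxx : x ∈ Subgroup.centralizer ({x} : Set G) := mem_cent_iff.mpr rfl
  have hdvd : Nat.card (Subgroup.center G) ∣ Nat.card (Subgroup.centralizer ({x} : Set G)) :=
    Subgroup.card_dvd_of_le hZle
  have hsub : ((Subgroup.center G : Subgroup G) : Set G) ⊆
      ((Subgroup.centralizer ({x} : Set G)) : Set G) := hZle
  have hssub : ((Subgroup.center G : Subgroup G) : Set G) ⊂
      ((Subgroup.centralizer ({x} : Set G)) : Set G) :=
    ⟨hsub, fun h => hx (h hxx)⟩
  have hlt : Nat.card (Subgroup.center G) < Nat.card (Subgroup.centralizer ({x} : Set G)) := by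
    have := Set.ncard_lt_ncard hssub (Set.toFinite _)
    simpa [← Nat.card_coe_set_eq] using this
  have hpos : 0 < Nat.card (Subgroup.center G) := Nat.card_pos
  obtain ⟨k, hk⟩ := hdvd
  have hk2 : 2 ≤ k := by
    by_contra h
    interval_cases k <;> omega
  have h2Z : 2 * Nat.card (Subgroup.center G) ≤
      Nat.card (Subgroup.centralizer ({x} : Set G)) := by
    calc 2 * Nat.card (Subgroup.center G) = Nat.card (Subgroup.center G) * 2 := by ring
    _ ≤ Nat.card (Subgroup.center G) * k := Nat.mul_le_mul_left _ hk2
    _ = _ := hk.symm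
  have hdiff : (((Subgroup.centralizer ({x} : Set G)) : Set G) \
      ((Subgroup.center G : Subgroup G) : Set G)).ncard =
      Nat.card (Subgroup.centralizer ({x} : Set G)) - Nat.card (Subgroup.center G) := by
    rw [Set.ncard_diff hsub]
    simp [← Nat.card_coe_set_eq]
  rw [hdiff]
  have := h3 x
  omega

private lemma ncard_le_of_partition [Finite G] {n : ℕ} {A : Fin n → Set G}
    (hA : IsAbelianPartition A) {S : Set G}
    (hS : ∀ x ∈ S, ∀ y ∈ S, x ≠ y → x * y ≠ y * x) : S.ncard ≤ n := by
  have hchoice : ∀ s : S, ∃ i, (s : G) ∈ A i := by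
    intro s
    have : (s : G) ∈ ⋃ i, A i := hA.2.1 ▸ Set.mem_univ _
    simpa using this
  choose f hf using hchoice
  have hinj : Function.Injective f := by
    intro s t hst
    by_contra hne
    have hne' : (s : G) ≠ t := fun h => hne (Subtype.ext h)
    exact hS s s.2 t t.2 hne' (hA.2.2.2 (f s) s (hf s) t (hst ▸ hf t))
  calc S.ncard = Nat.card S := (Nat.card_coe_set_eq S).symm
    _ ≤ Nat.card (Fin n) := Nat.card_le_card_of_injective f hinj
    _ = n := by simp

end Aux

theorem AC_group_apDegree_eq_maxNoncommuting
    {G : Type*} [Group G] [Finite G]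
    (hna : ∃ x y : G, x * y ≠ y * x)
    (hAC : ∀ x : G, x ∉ Subgroup.center G →
      ∀ a ∈ Subgroup.centralizer {x}, ∀ b ∈ Subgroup.centralizer {x}, a * b = b * a)
    (h3 : ∀ x : G, 3 ≤ Nat.card (Subgroup.centralizer ({x} : Set G))) :
    (∃ (n : ℕ) (A : Fin n → Set G), IsAbelianPartition A) ∧
      apDegree G = maxNoncommuting G := by
  classical
  haveI : Fintype G := Fintype.ofFinite G
  haveI : Fintype (Subgroup G) := Fintype.ofFinite _
  obtain ⟨x₀, y₀, hxy⟩ := hna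
  have hx₀ : x₀ ∉ Subgroup.center G := fun h => hxy ((Subgroup.mem_center_iff.mp h) y₀).symm
  set Z : Set G := ((Subgroup.center G : Subgroup G) : Set G) with hZdef
  set T : Finset (Subgroup G) :=
    Finset.univ.filter
      (fun H => ∃ x, x ∉ Subgroup.center G ∧ Subgroup.centralizer ({x} : Set G) = H) with hTdef
  set φ : ↥T ≃ Fin T.card := T.equivFin with hφdef
  have hTmem : ∀ i : Fin T.card, ∃ x, x ∉ Subgroup.center G ∧
      Subgroup.centralizer ({x} : Set G) = ((φ.symm i : Subgroup G)) := by
    intro i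
    have h := (φ.symm i).2
    exact (Finset.mem_filter.mp h).2
  choose w hw1 hw2 using hTmem
  have hT₀ : Subgroup.centralizer ({x₀} : Set G) ∈ T := by
    simp only [hTdef, Finset.mem_filter, Finset.mem_univ, true_and]
    exact ⟨x₀, hx₀, rfl⟩
  set i₀ : Fin T.card := φ ⟨_, hT₀⟩ with hi₀def
  have hφi₀ : ((φ.symm i₀ : Subgroup G)) = Subgroup.centralizer ({x₀} : Set G) := by
    simp [hi₀def]
  set A : Fin T.card → Set G := fun i =>
    if i = i₀ then ((Subgroup.centralizer ({x₀} : Set G)) : Set G)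
    else ((φ.symm i : Subgroup G) : Set G) \ Z with hAdef
  -- basic inclusions
  have hsub1 : ∀ i, ((φ.symm i : Subgroup G) : Set G) \ Z ⊆ A i := by
    intro i
    by_cases h : i = i₀
    · subst h; simp [hAdef, hφi₀, Set.diff_subset]
    · simp [hAdef, h]
  have hsub2 : ∀ i, A i ⊆ ((φ.symm i : Subgroup G) : Set G) := by
    intro i
    by_cases h : i = i₀
    · subst h; simp [hAdef, hφi₀]
    · simp [hAdef, h, Set.diff_subset]
  have hinjφ : ∀ i j : Fin T.card,
      ((φ.symm i : Subgroup G)) = ((φ.symm j : Subgroup G)) → i = j := by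
    intro i j h
    have : φ.symm i = φ.symm j := Subtype.ext h
    simpa using congrArg φ this
  have hkey : ∀ i, ∀ g ∈ A i, g ∉ Subgroup.center G →
      Subgroup.centralizer ({g} : Set G) = ((φ.symm i : Subgroup G)) := by
    intro i g hg hgZ
    have hg' : g ∈ Subgroup.centralizer ({w i} : Set G) := by
      rw [hw2 i]; exact hsub2 i hg
    rw [← hw2 i]
    exact cent_eq_of hAC (hw1 i) hgZ hg'
  -- the partition
  have hPart : IsAbelianPartition A := by
    refine ⟨?_, ?_, ?_, ?_⟩
    · intro i
      refine le_trans ?_ (Set.ncard_le_ncard (hsub1 i) (Set.toFinite _))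
      have := two_le_ncard_diff h3 (hw1 i)
      rwa [hw2 i] at this
    · apply Set.eq_univ_of_forall
      intro g
      by_cases hgZ : g ∈ Subgroup.center G
      · refine Set.mem_iUnion.mpr ⟨i₀, ?_⟩
        simp only [hAdef, if_pos rfl]
        exact Subgroup.center_le_centralizer _ hgZ
      · have hgT : Subgroup.centralizer ({g} : Set G) ∈ T := by
          simp only [hTdef, Finset.mem_filter, Finset.mem_univ, true_and]
          exact ⟨g, hgZ, rfl⟩
        refine Set.mem_iUnion.mpr ⟨φ ⟨_, hgT⟩, hsub1 _ ?_⟩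
        constructor
        · simp only [Equiv.symm_apply_apply]
          exact mem_cent_iff.mpr rfl
        · exact hgZ
    · intro i j hij
      rw [Function.onFun, Set.disjoint_left]
      intro g hgi hgj
      by_cases hgZ : g ∈ Subgroup.center G
      · have hZi : ∀ k, g ∈ A k → k = i₀ := by
          intro k hk
          by_contra hk0
          simp only [hAdef, if_neg hk0, Set.mem_diff] at hk
          exact hk.2 hgZ
        exact hij ((hZi i hgi).trans (hZi j hgj).symm)
      · exact hij (hinjφ i j ((hkey i g hgi hgZ).symm.trans (hkey j g hgj hgZ)))
    · intro i a ha b hb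
      have ha' : a ∈ Subgroup.centralizer ({w i} : Set G) := by
        rw [hw2 i]; exact hsub2 i ha
      have hb' : b ∈ Subgroup.centralizer ({w i} : Set G) := by
        rw [hw2 i]; exact hsub2 i hb
      exact hAC (w i) (hw1 i) a ha' b hb'
  -- the noncommuting set
  have hwinj : Function.Injective w := by
    intro i j h
    exact hinjφ i j (by rw [← hw2 i, ← hw2 j, h])
  have hcard : (Set.range w).ncard = T.card := by
    rw [← Nat.card_coe_set_eq, Nat.card_range_of_injective hwinj]
    simp
  have hnc : ∀ x ∈ Set.range w, ∀ y ∈ Set.range w, x ≠ y → x * y ≠ y * x := by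
    rintro x ⟨i, rfl⟩ y ⟨j, rfl⟩ hne hcomm
    have hij : i ≠ j := fun h => hne (by rw [h])
    have hyi : w j ∈ Subgroup.centralizer ({w i} : Set G) := mem_cent_iff.mpr hcomm
    have := cent_eq_of hAC (hw1 i) (hw1 j) hyi
    exact hij (hinjφ i j (by rw [← hw2 i, ← hw2 j, this]))
  -- assembly
  set P : Set ℕ := {n | ∃ A : Fin n → Set G, IsAbelianPartition A} with hPdef
  set K : Set ℕ := {k | ∃ S : Set G, S.ncard = k ∧
      ∀ x ∈ S, ∀ y ∈ S, x ≠ y → x * y ≠ y * x} with hKdef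
  have hmP : T.card ∈ P := ⟨A, hPart⟩
  have hmK : T.card ∈ K := ⟨Set.range w, hcard, hnc⟩
  have hKbdd : BddAbove K := by
    refine ⟨Nat.card G, ?_⟩
    rintro k ⟨S, rfl, -⟩
    calc S.ncard ≤ (Set.univ : Set G).ncard :=
          Set.ncard_le_ncard (Set.subset_univ S) (Set.toFinite _)
      _ = Nat.card G := Set.ncard_univ G
  have hKle : ∀ k ∈ K, k ≤ sInf P := by
    rintro k ⟨S, rfl, hS⟩
    obtain ⟨A', hA'⟩ := Nat.sInf_mem (⟨T.card, hmP⟩ : P.Nonempty)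
    exact ncard_le_of_partition hA' hS
  refine ⟨⟨T.card, A, hPart⟩, ?_⟩
  show sInf P = sSup K
  apply le_antisymm
  · exact le_trans (Nat.sInf_le hmP) (le_csSup hKbdd hmK)
  · exact csSup_le ⟨T.card, hmK⟩ hKle
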